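/- Let g ∈ (−2, 2), set h = √(1 − g²/4), and let q > 0. Then for every b > 0: arctan( (q + (g/2)b)/(hb) ) + arctan( (2b + gq)/(2hq) ) = π/2 + arctan( g/(2h) ); and for every b < 0: arctan( (q + (g/2)b)/(hb) ) + arctan( (2b + gq)/(2hq) ) = −π/2 + arctan( g/(2h) ). -/

import Mathlib

noncomputable section

open Real

private lemma key (g h q b : ℝ) (hg1 : -2 < g) (hg2 : g < 2)
    (hh : h = Real.sqrt (1 - g ^ 2 / 4)) (hq : 0 < q) (hb : 0 < b) :
    Real.arctan ((q + (g / 2) * b) / (h * b))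
      + Real.arctan ((2 * b + g * q) / (2 * h * q))
    = Real.pi / 2 + Real.arctan (g / (2 * h)) := by
  have harg : 0 < 1 - g ^ 2 / 4 := by nlinarith
  have hh2 : h ^ 2 = 1 - g ^ 2 / 4 := by rw [hh]; exact Real.sq_sqrt harg.le
  have hhpos : 0 < h := by rw [hh]; exact Real.sqrt_pos.mpr harg
  set X : ℝ := (q + (g / 2) * b) / (h * b) with hX
  set Y : ℝ := (2 * b + g * q) / (2 * h * q) with hY
  set v : ℝ := g / (2 * h) with hv
  rcases lt_trichotomy (2 * q + g * b) 0 with hd | hd | hd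
  · -- d < 0 : X < 0, v < 0, v * X⁻¹ > 1
    have hgb : g * b < 0 := by linarith
    have hgneg : g < 0 := by
      rcases lt_or_ge g 0 with h' | h'; · exact h'
      exact absurd hgb (not_lt.mpr (mul_nonneg h' hb.le))
    have hnum : q + (g / 2) * b < 0 := by linarith
    have hXneg : X < 0 := div_neg_of_neg_of_pos hnum (by positivity)
    have hvneg : v < 0 := div_neg_of_neg_of_pos hgneg (by positivity)
    have h1 : Real.arctan X⁻¹ = -(π / 2) - Real.arctan X := arctan_inv_of_neg hXneg
    have hXinv : X⁻¹ = (h * b) / (q + (g / 2) * b) := by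
      rw [hX, inv_div]
    have hprod : 1 < v * X⁻¹ := by
      rw [hv, hXinv]
      rw [div_mul_div_comm]
      rw [lt_div_iff_of_neg (by nlinarith : 2 * h * (q + g / 2 * b) < 0)]
      nlinarith
    have h2 := Real.arctan_add_eq_sub_pi hprod hvneg
    have h3 : (v + X⁻¹) / (1 - v * X⁻¹) = Y := by
      have hne : q + g / 2 * b ≠ 0 := ne_of_lt hnum
      have hne2 : q * 2 + g * b ≠ 0 := by intro h'; exact hne (by linarith)
      have hhne : h ≠ 0 := ne_of_gt hhpos
      have hqne : q ≠ 0 := ne_of_gt hq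
      have hBne : 1 - v * X⁻¹ ≠ 0 := by intro h'; rw [sub_eq_zero] at h'; linarith [hprod]
      rw [div_eq_iff hBne, hv, hXinv, hY]
      have hne3 : 2 * q + g * b ≠ 0 := by intro h'; exact hne (by linarith)
      field_simp
      linear_combination (4*q*b) * hh2
    rw [h3] at h2
    linarith only [h1, h2]
  · -- d = 0 : X = 0, Y = -(v⁻¹)
    have hgb : g * b = -(2 * q) := by linarith
    have hgneg : g < 0 := by
      rcases lt_or_ge g 0 with h' | h'; · exact h'
      nlinarith
    have hvneg : v < 0 := div_neg_of_neg_of_pos hgneg (by positivity)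
    have hX0 : X = 0 := by
      rw [hX]
      have : q + (g / 2) * b = 0 := by linarith
      rw [this, zero_div]
    have hYv : Y = -(v⁻¹) := by
      have hgne : g ≠ 0 := ne_of_lt hgneg
      rw [hY, hv, inv_div]
      rw [div_eq_iff (by positivity : (2 : ℝ) * h * q ≠ 0), neg_mul, div_mul_eq_mul_div,
        ← neg_div, eq_div_iff hgne]
      linear_combination 2 * hgb + 4 * q * hh2
    rw [hX0, hYv, Real.arctan_zero, Real.arctan_neg, arctan_inv_of_neg hvneg]
    ring
  · -- d > 0 : X > 0, v * X⁻¹ < 1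
    have hnum : 0 < q + (g / 2) * b := by linarith
    have hXpos : 0 < X := div_pos hnum (by positivity)
    have h1 : Real.arctan X⁻¹ = π / 2 - Real.arctan X := arctan_inv_of_pos hXpos
    have hXinv : X⁻¹ = (h * b) / (q + (g / 2) * b) := by
      rw [hX, inv_div]
    have hprod : v * X⁻¹ < 1 := by
      rw [hv, hXinv, div_mul_div_comm]
      rw [div_lt_one (by positivity : 0 < 2 * h * (q + g / 2 * b))]
      nlinarith
    have h2 := Real.arctan_add hprod
    have h3 : (v + X⁻¹) / (1 - v * X⁻¹) = Y := by
      have hne : q + g / 2 * b ≠ 0 := ne_of_gt hnum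
      have hne2 : q * 2 + g * b ≠ 0 := by intro h'; exact hne (by linarith)
      have hhne : h ≠ 0 := ne_of_gt hhpos
      have hqne : q ≠ 0 := ne_of_gt hq
      have hBne : 1 - v * X⁻¹ ≠ 0 := by intro h'; rw [sub_eq_zero] at h'; linarith [hprod]
      rw [div_eq_iff hBne, hv, hXinv, hY]
      have hne3 : 2 * q + g * b ≠ 0 := by intro h'; exact hne (by linarith)
      field_simp
      linear_combination (4*q*b) * hh2
    rw [h3] at h2
    linarith only [h1, h2]

/-- For a Finsleroid charge `g ∈ (−2,2)`, `h = √(1 − g²/4)` and `q > 0`: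
for every `b > 0`,
`arctan((q + (g/2)b)/(hb)) + arctan((2b + gq)/(2hq)) = π/2 + arctan(g/(2h))`,
and for every `b < 0` the same sum equals `−π/2 + arctan(g/(2h))`. -/
theorem arctan_sum_identity (g : ℝ) (hg : g ∈ Set.Ioo (-2 : ℝ) 2)
    (h : ℝ) (hh : h = Real.sqrt (1 - g ^ 2 / 4)) (q : ℝ) (hq : 0 < q) :
    (∀ b : ℝ, 0 < b →
      Real.arctan ((q + (g / 2) * b) / (h * b))
        + Real.arctan ((2 * b + g * q) / (2 * h * q))
      = Real.pi / 2 + Real.arctan (g / (2 * h))) ∧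
    (∀ b : ℝ, b < 0 →
      Real.arctan ((q + (g / 2) * b) / (h * b))
        + Real.arctan ((2 * b + g * q) / (2 * h * q))
      = -(Real.pi / 2) + Real.arctan (g / (2 * h))) := by
  obtain ⟨hg1, hg2⟩ := hg
  constructor
  · intro b hb
    exact key g h q b hg1 hg2 hh hq hb
  · intro b hb
    have hh' : h = Real.sqrt (1 - (-g) ^ 2 / 4) := by rw [hh]; ring_nf
    have := key (-g) h q (-b) (by linarith) (by linarith) hh' hq (by linarith)
    have e1 : (q + (-g / 2) * (-b)) / (h * (-b)) = -((q + (g / 2) * b) / (h * b)) := by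
      ring
    have e2 : (2 * (-b) + (-g) * q) / (2 * h * q) = -((2 * b + g * q) / (2 * h * q)) := by
      ring
    have e3 : (-g) / (2 * h) = -(g / (2 * h)) := by ring
    rw [e1, e2, e3, Real.arctan_neg, Real.arctan_neg, Real.arctan_neg] at this
    linarith
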